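/- For every integer i ≥ 1: (a) σ(ψ_i(x,y)) + ψ_i(x,y) = ((X·h′(X) + i·h(X))^{≤i})(x) · h(x) in K, where ψ_i(x,y) := ((X·f′(X))^{≤i})(x) + ((X·h′(X) + i·h(X))^{≤i})(x)·y; and (b) for every k-linear derivation D : K → K with D(x) = 1, x^{i+1}·D( (h^{≤i})(x)/xⁱ ) = ((X·h′(X) + i·h(X))^{≤i})(x). Consequently σ(ψ_i(x,y)/(x^{i+1}·h(x))) + ψ_i(x,y)/(x^{i+1}·h(x)) = D( (h^{≤i})(x)/xⁱ ). (This is the key computation showing the hyperelliptic involution acts trivially on H¹_dR in characteristic 2.) -/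

import Mathlib

open Polynomial

/-- The defining polynomial `Y² − h(X)·Y − f(X)`, as a polynomial in `Y` over `k[X]`. -/
noncomputable def hypPoly {k : Type} [Field k] (h f : k[X]) : Polynomial (Polynomial k) :=
  X ^ 2 - C h * X - C f

/-- The affine coordinate ring `k[X][Y]/(Y² − h(X)·Y − f(X))`. -/
abbrev HypRing {k : Type} [Field k] (h f : k[X]) : Type :=
  AdjoinRoot (hypPoly h f)

/-- The truncation of a polynomial in degrees `≤ m`. -/
noncomputable def truncLE {k : Type} [Field k] (m : ℕ) (u : k[X]) : k[X] :=
  ∑ j ∈ Finset.range (m + 1), C (u.coeff j) * X ^ j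

lemma truncLE_coeff {k : Type} [Field k] (m n : ℕ) (u : k[X]) :
    (truncLE m u).coeff n = if n ≤ m then u.coeff n else 0 := by
  rw [truncLE, finset_sum_coeff]
  simp only [coeff_C_mul, coeff_X_pow]
  by_cases hnm : n ≤ m
  · rw [if_pos hnm, Finset.sum_eq_single n]
    · simp
    · intro b _ hb; rw [if_neg (fun hn => hb hn.symm), mul_zero]
    · intro hn; simp [Nat.lt_succ_iff] at hn; omega
  · rw [if_neg hnm, Finset.sum_eq_zero]
    intro j hj; simp only [Finset.mem_range, Nat.lt_succ_iff] at hj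
    rw [if_neg (by omega), mul_zero]

lemma deriv_aeval {k K : Type} [Field k] [Field K] [Algebra k K] (D : Derivation k K K)
    (x : K) (u : k[X]) : D (aeval x u) = aeval x (derivative u) * D x := by
  induction u using Polynomial.induction_on with
  | C a => simp [Derivation.map_algebraMap]
  | add p q hp hq => simp [hp, hq, add_mul]
  | monomial n a ih =>
    simp only [map_mul, aeval_C, aeval_X_pow, derivative_C_mul, derivative_X_pow,
      map_natCast, map_pow, aeval_X]
    rw [D.leibniz, Derivation.map_algebraMap, D.leibniz_pow]
    simp only [Nat.add_sub_cancel, smul_eq_mul, nsmul_eq_mul]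
    push_cast
    ring

lemma trunc_identity {k : Type} [Field k] (i : ℕ) (u : k[X]) :
    X * derivative (truncLE i u) + C (i : k) * truncLE i u
      = truncLE i (X * derivative u + C (i : k) * u) := by
  ext n
  cases n with
  | zero =>
    simp only [coeff_add, mul_coeff_zero, coeff_X_zero, zero_mul, coeff_C_mul,
      truncLE_coeff, Nat.zero_le, if_pos, zero_add]
  | succ m =>
    simp only [coeff_add, coeff_X_mul, coeff_derivative, coeff_C_mul, truncLE_coeff]
    by_cases hmi : m + 1 ≤ i
    · simp only [if_pos hmi, coeff_add, coeff_X_mul, coeff_derivative, coeff_C_mul]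
    · simp only [if_neg hmi]; ring

theorem statement12 {k : Type} [Field k] [CharP k 2]
    (h f : k[X]) (hh : h ≠ 0)
    (hirr : Irreducible ((hypPoly h f).map (algebraMap (Polynomial k) (RatFunc k))))
    (K : Type) [Field K] [Algebra k K] [Algebra (HypRing h f) K]
    [IsScalarTower k (HypRing h f) K] [IsFractionRing (HypRing h f) K]
    (x y : K)
    (hx : x = algebraMap (HypRing h f) K (AdjoinRoot.of (hypPoly h f) X))
    (hy : y = algebraMap (HypRing h f) K (AdjoinRoot.root (hypPoly h f)))
    (σ : K ≃ₐ[k] K) (hσx : σ x = x) (hσy : σ y = y + aeval x h)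
    (i : ℕ) (hi : 1 ≤ i) :
    σ (aeval x (truncLE i (X * derivative f)) +
          aeval x (truncLE i (X * derivative h + C (i : k) * h)) * y) +
        (aeval x (truncLE i (X * derivative f)) +
          aeval x (truncLE i (X * derivative h + C (i : k) * h)) * y) =
      aeval x (truncLE i (X * derivative h + C (i : k) * h)) * aeval x h ∧
    ∀ D : Derivation k K K, D x = 1 →
      x ^ (i + 1) * D (aeval x (truncLE i h) / x ^ i) =
          aeval x (truncLE i (X * derivative h + C (i : k) * h)) ∧
        σ ((aeval x (truncLE i (X * derivative f)) +
              aeval x (truncLE i (X * derivative h + C (i : k) * h)) * y) /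
            (x ^ (i + 1) * aeval x h)) +
          (aeval x (truncLE i (X * derivative f)) +
              aeval x (truncLE i (X * derivative h + C (i : k) * h)) * y) /
            (x ^ (i + 1) * aeval x h) =
        D (aeval x (truncLE i h) / x ^ i) := by
  -- char 2 in K
  haveI : CharP K 2 := charP_of_injective_algebraMap (algebraMap k K).injective 2
  have h2 : (2 : K) = 0 := by exact_mod_cast CharP.cast_eq_zero K 2
  -- σ fixes everything coming from k[X]
  have hσa : ∀ u : k[X], σ (aeval x u) = aeval x u := by
    intro u
    have h1 : (σ : K →ₐ[k] K) x = x := hσx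
    exact (Polynomial.aeval_algHom_apply (σ : K →ₐ[k] K) x u).symm.trans (by rw [h1])
  -- abbreviations
  set A := aeval x (truncLE i (X * derivative f)) with hA
  set B := aeval x (truncLE i (X * derivative h + C (i : k) * h)) with hB
  set Hx := aeval x h with hHx
  set T := aeval x (truncLE i h) with hT
  have hσA : σ A = A := hσa _
  have hσB : σ B = B := hσa _
  have hσHx : σ Hx = Hx := hσa _
  -- part (a)
  have parta : σ (A + B * y) + (A + B * y) = B * Hx := by
    rw [map_add, map_mul, hσA, hσB, hσy]
    linear_combination (A + B * y) * h2
  refine ⟨parta, ?_⟩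
  -- injectivity of k[X] → K
  have hdle : (C h * X + C f : (k[X])[X]).degree ≤ 1 := by
    refine (degree_add_le _ _).trans (max_le ?_ (degree_C_le.trans (by norm_num)))
    exact (degree_mul_le _ _).trans
      (by simpa [degree_X] using add_le_add degree_C_le (le_refl (degree (X : (k[X])[X]))))
  have heq : hypPoly h f = X ^ (1 + 1) - (C h * X + C f) := by rw [hypPoly]; ring
  have hdlt : (C h * X + C f : (k[X])[X]).degree < ((1 + 1 : ℕ) : WithBot ℕ) :=
    hdle.trans_lt (by exact_mod_cast one_lt_two)
  have hmon : (hypPoly h f).Monic := by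
    rw [heq]
    exact monic_X_pow_sub hdlt
  have hirr' : Irreducible (hypPoly h f) :=
    Monic.irreducible_of_irreducible_map _ _ hmon hirr
  haveI : IsDomain (HypRing h f) :=
    AdjoinRoot.isDomain_of_prime (UniqueFactorizationMonoid.irreducible_iff_prime.mp hirr')
  have hdeg : (hypPoly h f).degree ≠ 0 := by
    have h1 : (C h * X + C f : (k[X])[X]).degree < (X ^ (1 + 1) : (k[X])[X]).degree := by
      rw [degree_X_pow]; exact hdlt
    have h2' : (hypPoly h f).degree = 2 := by
      rw [heq, degree_sub_eq_left_of_degree_lt h1, degree_X_pow]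
      rfl
    rw [h2']
    exact_mod_cast (by norm_num : (2 : WithBot ℕ) ≠ 0)
  have hinj : Function.Injective
      ((algebraMap (HypRing h f) K).comp (AdjoinRoot.of (hypPoly h f))) :=
    (IsFractionRing.injective _ K).comp (AdjoinRoot.of.injective_of_degree_ne_zero hdeg)
  have haev : ∀ u : k[X],
      aeval x u = ((algebraMap (HypRing h f) K).comp (AdjoinRoot.of (hypPoly h f))) u := by
    intro u
    rw [RingHom.comp_apply, hx, Polynomial.aeval_algebraMap_apply]
    congr 1
    rw [← AdjoinRoot.algebraMap_eq, Polynomial.aeval_algebraMap_apply, aeval_X_left_apply]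
  have hinj2 : ∀ u : k[X], aeval x u = 0 → u = 0 := by
    intro u hu
    apply hinj
    rw [← haev, hu, map_zero]
  have hx0 : x ≠ 0 := by
    intro e
    exact X_ne_zero (hinj2 X (by rwa [aeval_X]))
  have hHx0 : Hx ≠ 0 := fun e => hh (hinj2 h e)
  -- part (b)
  intro D hD
  have hDT : D T = aeval x (derivative (truncLE i h)) := by
    rw [hT, deriv_aeval, hD, mul_one]
  have hb : x ^ (i + 1) * D (T / x ^ i) = B := by
    have key : x * aeval x (derivative (truncLE i h)) + (i : K) * T = B := by
      have := congrArg (aeval x) (trunc_identity i h)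
      rw [hT, hB]
      simpa [map_add, map_mul, aeval_X, aeval_C, map_natCast] using this
    obtain ⟨j, rfl⟩ : ∃ j, i = j + 1 := ⟨i - 1, by omega⟩
    have hDx : D (x ^ (j + 1)) = ((j + 1 : ℕ) : K) * x ^ j := by
      rw [D.leibniz_pow, hD]
      simp [Nat.add_sub_cancel, nsmul_eq_mul]
    rw [D.leibniz_div, CharTwo.sub_eq_add, hDT, hDx]
    simp only [smul_eq_mul]
    rw [← key]
    field_simp
    ring
  refine ⟨hb, ?_⟩
  have hD2 : D (T / x ^ i) = B / x ^ (i + 1) :=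
    (eq_div_iff (pow_ne_zero _ hx0)).mpr (by rw [mul_comm]; exact hb)
  have hσc : σ (x ^ (i + 1) * Hx) = x ^ (i + 1) * Hx := by
    rw [map_mul, map_pow, hσx, hσHx]
  rw [hD2, map_div₀, hσc, ← add_div, parta, mul_div_mul_right _ _ hHx0]
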